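/- For all bounded intervals I, J ⊂ ℝ with |I| = |J| > 0 and I ∩ J = ∅, one has ∫_ℝ Φ_I(x)·h_{J_+}(x) dx + ∫_ℝ Φ_J(x)·h_{I_+}(x) dx < 0. -/

import Mathlib

open MeasureTheory Set Filter Topology

/-- `Φ(x) = (1/π) ln(4|x(x-1)|/(2x-1)²)`, the Hilbert transform of the Haar
function `h_{[0,1)} = 1_{[1/2,1)} - 1_{[0,1/2)}`. -/
noncomputable def Phi (x : ℝ) : ℝ :=
  (1 / Real.pi) * Real.log (4 * |x * (x - 1)| / (2 * x - 1) ^ 2)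

/-- `Φ_I` for the interval `I = [a, a + ℓ)`: `Φ_I(x) = Φ((x - a)/ℓ)`. -/
noncomputable def PhiI (a ℓ : ℝ) (x : ℝ) : ℝ :=
  Phi ((x - a) / ℓ)

/-- The Haar function of the interval `[a, b)`: `1` on the right half,
`-1` on the left half, `0` outside. -/
noncomputable def haarOn (a b : ℝ) (x : ℝ) : ℝ :=
  if x ∈ Set.Ico ((a + b) / 2) b then 1 else if x ∈ Set.Ico a ((a + b) / 2) then -1 else 0

noncomputable def FF (x : ℝ) : ℝ :=
  (1 / Real.pi) * (x * Real.log x + (x - 1) * Real.log (x - 1)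
    - 2 * ((x - 1/2) * Real.log (x - 1/2)))

lemma FF_cont : Continuous FF := by
  have h1 : Continuous fun x : ℝ => x * Real.log x := Real.continuous_mul_log
  have h2 : Continuous fun x : ℝ => (x - 1) * Real.log (x - 1) :=
    h1.comp (continuous_sub_right 1)
  have h3 : Continuous fun x : ℝ => (x - 1/2) * Real.log (x - 1/2) :=
    h1.comp (continuous_sub_right (1/2))
  exact continuous_const.mul ((h1.add h2).sub (continuous_const.mul h3))

lemma Phi_eq {x : ℝ} (h0 : x ≠ 0) (hh : x ≠ 1/2) (h1 : x ≠ 1) :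
    Phi x = (1 / Real.pi) * (Real.log x + Real.log (x - 1) - 2 * Real.log (x - 1/2)) := by
  have hx1 : x - 1 ≠ 0 := sub_ne_zero.2 h1
  have hxh : x - 1/2 ≠ 0 := sub_ne_zero.2 hh
  have h2x : 2 * x - 1 ≠ 0 := by
    intro h; apply hh; linarith
  have habs : |x * (x - 1)| ≠ 0 := abs_ne_zero.2 (mul_ne_zero h0 hx1)
  have hnum : 4 * |x * (x - 1)| ≠ 0 := mul_ne_zero (by norm_num) habs
  have hden : ((2 * x - 1) ^ 2 : ℝ) ≠ 0 := pow_ne_zero 2 h2x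
  unfold Phi
  rw [Real.log_div hnum hden, Real.log_mul (by norm_num : (4:ℝ) ≠ 0) habs, Real.log_abs,
    Real.log_mul h0 hx1, Real.log_pow]
  have h4 : Real.log 4 = 2 * Real.log 2 := by
    rw [show (4:ℝ) = 2 ^ 2 by norm_num, Real.log_pow]; push_cast; ring
  have h2 : Real.log (2 * x - 1) = Real.log 2 + Real.log (x - 1/2) := by
    rw [show 2 * x - 1 = 2 * (x - 1/2) by ring, Real.log_mul (by norm_num) hxh]
  rw [h4, h2]; push_cast; ring

lemma FF_one_sub (x : ℝ) : FF (1 - x) = - FF x := by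
  unfold FF
  rw [show (1:ℝ) - x = -(x - 1) by ring]
  rw [show -(x - (1:ℝ)) - 1 = -x by ring, show -(x - (1:ℝ)) - 1/2 = -(x - 1/2) by ring]
  rw [Real.log_neg_eq_log, Real.log_neg_eq_log, Real.log_neg_eq_log]
  ring

lemma FF_hasDeriv {x : ℝ} (h0 : x ≠ 0) (hh : x ≠ 1/2) (h1 : x ≠ 1) :
    HasDerivAt FF (Phi x) x := by
  have hx1 : x - 1 ≠ 0 := sub_ne_zero.2 h1
  have hxh : x - 1/2 ≠ 0 := sub_ne_zero.2 hh
  have d1 := Real.hasDerivAt_mul_log h0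
  have d2 : HasDerivAt (fun y : ℝ => (y - 1) * Real.log (y - 1)) (Real.log (x - 1) + 1) x := by
    have := (Real.hasDerivAt_mul_log hx1).comp x ((hasDerivAt_id x).sub_const 1)
    simpa [Function.comp_def] using this
  have d3 : HasDerivAt (fun y : ℝ => (y - 1/2) * Real.log (y - 1/2))
      (Real.log (x - 1/2) + 1) x := by
    have := (Real.hasDerivAt_mul_log hxh).comp x ((hasDerivAt_id x).sub_const (1/2))
    simpa [Function.comp_def] using this
  have hD := (((d1.add d2).sub (d3.const_mul 2)).const_mul (1 / Real.pi))
  have : HasDerivAt FF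
      ((1 / Real.pi) * ((Real.log x + 1 + (Real.log (x - 1) + 1))
        - 2 * (Real.log (x - 1/2) + 1))) x := hD
  convert this using 1
  rw [Phi_eq h0 hh h1]; ring


section
lemma log01 : IntervalIntegrable Real.log volume 0 1 := by
  have h : IntervalIntegrable (fun x : ℝ => -Real.log x) volume 0 1 := by
    apply intervalIntegral.intervalIntegrable_deriv_of_nonneg (g := fun x : ℝ => x - x * Real.log x)
    · exact (continuous_id.sub Real.continuous_mul_log).continuousOn
    · intro x hx
      simp only [min_eq_left, max_eq_right, zero_le_one] at hx
      have hx0 : x ≠ 0 := ne_of_gt hx.1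
      have := (hasDerivAt_id x).sub (Real.hasDerivAt_mul_log hx0)
      exact this.congr_deriv (by ring)
    · intro x hx
      simp only [min_eq_left, max_eq_right, zero_le_one] at hx
      simp only [neg_nonneg]
      exact Real.log_nonpos hx.1.le hx.2.le
  have h2 := h.neg
  have : (-fun x : ℝ => -Real.log x) = Real.log := by funext x; simp
  rwa [this] at h2

lemma log_ii_nonneg {c : ℝ} (hc : 0 ≤ c) : IntervalIntegrable Real.log volume 0 c := by
  rcases le_total c 1 with h | h
  · apply log01.mono_set
    rw [uIcc_of_le hc, uIcc_of_le zero_le_one]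
    exact Icc_subset_Icc le_rfl h
  · exact log01.trans (intervalIntegral.intervalIntegrable_log (notMem_uIcc_of_lt one_pos (by linarith)))

lemma log_ii (a b : ℝ) : IntervalIntegrable Real.log volume a b := by
  have key : ∀ c : ℝ, IntervalIntegrable Real.log volume 0 c := by
    intro c
    rcases le_total 0 c with h | h
    · exact log_ii_nonneg h
    · have h2 := log_ii_nonneg (show (0:ℝ) ≤ -c by linarith)
      have h3 := (IntervalIntegrable.iff_comp_neg (f := Real.log)).1 h2
      simp only [Real.log_neg_eq_log, neg_zero, neg_neg] at h3
      exact h3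
  exact (key a).symm.trans (key b)
end


lemma log_ii_sub (a b c : ℝ) : IntervalIntegrable (fun x => Real.log (x - c)) volume a b := by
  have h := (log_ii (a - c) (b - c)).comp_sub_right c
  rwa [show a - c + c = a by ring, show b - c + c = b by ring] at h

lemma Phi_aeeq :
    (fun x : ℝ => (1 / Real.pi) * (Real.log x + Real.log (x - 1) - 2 * Real.log (x - 1/2)))
      =ᵐ[volume] Phi := by
  have hsub : {x : ℝ | ¬ ((1 / Real.pi) * (Real.log x + Real.log (x - 1)
      - 2 * Real.log (x - 1/2)) = Phi x)} ⊆ {0, 1/2, 1} := by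
    intro x hx
    by_contra hx'
    simp only [mem_insert_iff, mem_singleton_iff, not_or] at hx'
    exact hx (Phi_eq hx'.1 hx'.2.1 hx'.2.2).symm
  have hnull : volume ({0, 1/2, 1} : Set ℝ) = 0 := by
    exact (Set.Finite.insert _ ((Set.finite_singleton _).insert _)).measure_zero _
  exact measure_mono_null hsub hnull

lemma Phi_ii (a b : ℝ) : IntervalIntegrable Phi volume a b := by
  have base : IntervalIntegrable
      (fun x : ℝ => (1 / Real.pi) * (Real.log x + Real.log (x - 1) - 2 * Real.log (x - 1/2)))
      volume a b :=
    (((log_ii a b).add (log_ii_sub a b 1)).sub ((log_ii_sub a b (1/2)).const_mul 2)).const_mul _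
  have h := Phi_aeeq
  constructor
  · exact base.1.congr (ae_restrict_of_ae h)
  · exact base.2.congr (ae_restrict_of_ae h)


lemma ne_three {x : ℝ} (h : 1 < x ∨ x < 0) : x ≠ 0 ∧ x ≠ 1/2 ∧ x ≠ 1 := by
  rcases h with h | h
  · exact ⟨by linarith, by intro he; rw [he] at h; linarith, by linarith⟩
  · exact ⟨by linarith, by intro he; rw [he] at h; linarith, by linarith⟩

lemma integral_Phi {p q : ℝ} (hpq : p ≤ q) (h : 1 ≤ p ∨ q ≤ 0) :
    ∫ t in p..q, Phi t = FF q - FF p := by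
  apply intervalIntegral.integral_eq_sub_of_hasDeriv_right_of_le hpq FF_cont.continuousOn _
    (Phi_ii p q)
  intro x hx
  have h3 : x ≠ 0 ∧ x ≠ 1/2 ∧ x ≠ 1 := by
    apply ne_three
    rcases h with h | h
    · exact Or.inl (lt_of_le_of_lt h hx.1)
    · exact Or.inr (lt_of_lt_of_le hx.2 h)
  exact (FF_hasDeriv h3.1 h3.2.1 h3.2.2).hasDerivWithinAt

lemma PhiI_ii (a : ℝ) {ℓ : ℝ} (hℓ : ℓ ≠ 0) (p q : ℝ) :
    IntervalIntegrable (PhiI a ℓ) volume p q := by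
  have h1 := (Phi_ii ((p - a) * ℓ⁻¹) ((q - a) * ℓ⁻¹)).comp_mul_right (c := ℓ⁻¹)
  have h2 := h1.comp_sub_right a
  have e1 : (p - a) * ℓ⁻¹ / ℓ⁻¹ + a = p := by field_simp; ring
  have e2 : (q - a) * ℓ⁻¹ / ℓ⁻¹ + a = q := by field_simp; ring
  rw [e1, e2] at h2
  have he : PhiI a ℓ = fun x => Phi ((x - a) * ℓ⁻¹) := by
    funext x; rw [PhiI, div_eq_mul_inv]
  rwa [he]

lemma integral_PhiI {a ℓ : ℝ} (hℓ : 0 < ℓ) {p q : ℝ} (hpq : p ≤ q)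
    (h : 1 ≤ (p - a) / ℓ ∨ (q - a) / ℓ ≤ 0) :
    ∫ x in p..q, PhiI a ℓ x = ℓ * FF ((q - a) / ℓ) - ℓ * FF ((p - a) / ℓ) := by
  have hcont : ContinuousOn (fun x : ℝ => ℓ * FF ((x - a) / ℓ)) (Icc p q) :=
    (continuous_const.mul (FF_cont.comp ((continuous_sub_right a).div_const ℓ))).continuousOn
  have hderiv : ∀ x ∈ Ioo p q,
      HasDerivWithinAt (fun x : ℝ => ℓ * FF ((x - a) / ℓ)) (PhiI a ℓ x) (Ioi x) x := by
    intro x hx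
    have h3 : (x - a) / ℓ ≠ 0 ∧ (x - a) / ℓ ≠ 1/2 ∧ (x - a) / ℓ ≠ 1 := by
      apply ne_three
      rcases h with h | h
      · left
        have hlt : (p - a) / ℓ < (x - a) / ℓ :=
          div_lt_div_of_pos_right (by linarith [hx.1]) hℓ
        linarith
      · right
        have hlt : (x - a) / ℓ < (q - a) / ℓ :=
          div_lt_div_of_pos_right (by linarith [hx.2]) hℓ
        linarith
    have hin : HasDerivAt (fun x : ℝ => (x - a) / ℓ) (1 / ℓ) x :=
      ((hasDerivAt_id x).sub_const a).div_const ℓ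
    have hc := ((FF_hasDeriv h3.1 h3.2.1 h3.2.2).comp x hin).const_mul ℓ
    have he : ℓ * (Phi ((x - a) / ℓ) * (1 / ℓ)) = PhiI a ℓ x := by
      rw [PhiI]; field_simp
    rw [he] at hc
    exact hc.hasDerivWithinAt
  have := intervalIntegral.integral_eq_sub_of_hasDeriv_right_of_le hpq hcont hderiv
    (PhiI_ii a hℓ.ne' p q)
  simpa using this


lemma prod_lt {t : ℝ} (ht : 1 < t) :
    (t - 1/4) ^ 3 * (t ^ 3 * ((t - 1) * (t + 3/4))) <
      (t + 1/4) ^ 3 * ((t - 3/4) * ((t + 1/2) * (t - 1/2) ^ 3)) := by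
  nlinarith [sq_nonneg ((t - 1) ^ 2), mul_nonneg (sub_nonneg.2 ht.le) (sq_nonneg (t - 1)),
    sq_nonneg (t - 1), sub_nonneg.2 ht.le]

lemma four_point {t : ℝ} (ht : 1 < t) :
    Phi t + Phi (t + 3/4) < Phi (t + 1/4) + Phi (t + 1/2) := by
  have p1 : (0:ℝ) < t := by linarith
  have p2 : (0:ℝ) < t - 1 := by linarith
  have p3 : (0:ℝ) < t - 1/2 := by linarith
  have p4 : (0:ℝ) < t - 1/4 := by linarith
  have p5 : (0:ℝ) < t - 3/4 := by linarith
  have p6 : (0:ℝ) < t + 1/4 := by linarith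
  have p7 : (0:ℝ) < t + 1/2 := by linarith
  have p8 : (0:ℝ) < t + 3/4 := by linarith
  rw [Phi_eq p1.ne' (ne_of_gt (by linarith)) (ne_of_gt ht),
    Phi_eq p8.ne' (ne_of_gt (by linarith)) (ne_of_gt (by linarith)),
    Phi_eq p6.ne' (ne_of_gt (by linarith)) (ne_of_gt (by linarith)),
    Phi_eq p7.ne' (ne_of_gt (by linarith)) (ne_of_gt (by linarith))]
  rw [show t + 3/4 - 1 = t - 1/4 by ring, show t + 3/4 - 1/2 = t + 1/4 by ring,
    show t + 1/4 - 1 = t - 3/4 by ring, show t + 1/4 - 1/2 = t - 1/4 by ring,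
    show t + 1/2 - 1 = t - 1/2 by ring, show t + 1/2 - 1/2 = t by ring]
  rw [← mul_add, ← mul_add]
  apply (mul_lt_mul_iff_right₀ (by positivity : (0:ℝ) < 1 / Real.pi)).2
  have hlog := Real.log_lt_log
    (mul_pos (pow_pos p4 3) (mul_pos (pow_pos p1 3) (mul_pos p2 p8))) (prod_lt ht)
  rw [Real.log_mul (pow_ne_zero 3 p4.ne') (mul_ne_zero (pow_ne_zero 3 p1.ne')
        (mul_ne_zero p2.ne' p8.ne')),
    Real.log_mul (pow_ne_zero 3 p1.ne') (mul_ne_zero p2.ne' p8.ne'),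
    Real.log_mul p2.ne' p8.ne',
    Real.log_mul (pow_ne_zero 3 p6.ne') (mul_ne_zero p5.ne'
        (mul_ne_zero p7.ne' (pow_ne_zero 3 p3.ne'))),
    Real.log_mul p5.ne' (mul_ne_zero p7.ne' (pow_ne_zero 3 p3.ne')),
    Real.log_mul p7.ne' (pow_ne_zero 3 p3.ne'),
    Real.log_pow, Real.log_pow, Real.log_pow, Real.log_pow] at hlog
  push_cast at hlog
  linarith

lemma Psi_neg {s : ℝ} (hs : 1 ≤ s) :
    FF (s + 1) - 2 * FF (s + 3/4) + 2 * FF (s + 1/4) - FF s < 0 := by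
  have hiPhi : ∀ c : ℝ, IntervalIntegrable (fun t => Phi (t + c)) volume s (s + 1/4) := by
    intro c
    have h := (Phi_ii (s + c) (s + 1/4 + c)).comp_add_right c
    rwa [show s + c - c = s by ring, show s + 1/4 + c - c = s + 1/4 by ring] at h
  have hInt : ∀ c : ℝ, 0 ≤ c → (∫ t in s..(s + 1/4), Phi (t + c)) = FF (s + 1/4 + c) - FF (s + c) := by
    intro c hc
    rw [intervalIntegral.integral_comp_add_right Phi c]
    exact integral_Phi (by linarith) (Or.inl (by linarith))
  have hpos : 0 < ∫ t in s..(s + 1/4),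
      (Phi (t + 1/4) + Phi (t + 1/2) - (Phi t + Phi (t + 3/4))) := by
    apply intervalIntegral.intervalIntegral_pos_of_pos_on
      (((hiPhi (1/4)).add (hiPhi (1/2))).sub ((Phi_ii s (s + 1/4)).add (hiPhi (3/4))))
    · intro x hx
      exact sub_pos.2 (four_point (lt_of_le_of_lt hs hx.1))
    · linarith
  rw [intervalIntegral.integral_sub ((hiPhi (1/4)).add (hiPhi (1/2)))
      ((Phi_ii s (s + 1/4)).add (hiPhi (3/4))),
    intervalIntegral.integral_add (hiPhi (1/4)) (hiPhi (1/2)),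
    intervalIntegral.integral_add (Phi_ii s (s + 1/4)) (hiPhi (3/4)),
    hInt (1/4) (by norm_num), hInt (1/2) (by norm_num), hInt (3/4) (by norm_num),
    integral_Phi (by linarith : s ≤ s + 1/4) (Or.inl hs)] at hpos
  have e1 : s + 1/4 + 1/4 = s + 1/2 := by ring
  have e2 : s + 1/4 + 1/2 = s + 3/4 := by ring
  have e3 : s + 1/4 + 3/4 = s + 1 := by ring
  rw [e1, e2, e3] at hpos
  linarith


lemma integral_PhiI_haar (a c : ℝ) {ℓ : ℝ} (hℓ : 0 < ℓ)
    (hs : 1 ≤ (c - a) / ℓ ∨ (c - a) / ℓ ≤ -1) :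
    (∫ x, PhiI a ℓ x * haarOn (c + ℓ / 2) (c + ℓ) x) =
      ℓ * (FF ((c - a) / ℓ + 1) - 2 * FF ((c - a) / ℓ + 3/4) + FF ((c - a) / ℓ + 1/2)) := by
  have hmid : (c + ℓ / 2 + (c + ℓ)) / 2 = c + 3 * ℓ / 4 := by ring
  have hfun : ∀ x, PhiI a ℓ x * haarOn (c + ℓ / 2) (c + ℓ) x =
      indicator (Ico (c + 3 * ℓ / 4) (c + ℓ)) (PhiI a ℓ) x
        - indicator (Ico (c + ℓ / 2) (c + 3 * ℓ / 4)) (PhiI a ℓ) x := by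
    intro x
    simp only [haarOn, hmid]
    by_cases h1 : x ∈ Ico (c + 3 * ℓ / 4) (c + ℓ)
    · have h2 : x ∉ Ico (c + ℓ / 2) (c + 3 * ℓ / 4) := fun hx => (not_lt.2 h1.1) hx.2
      rw [if_pos h1, indicator_of_mem h1, indicator_of_notMem h2]; ring
    · rw [if_neg h1, indicator_of_notMem h1]
      by_cases h2 : x ∈ Ico (c + ℓ / 2) (c + 3 * ℓ / 4)
      · rw [if_pos h2, indicator_of_mem h2]; ring
      · rw [if_neg h2, indicator_of_notMem h2]; ring
  have hio : ∀ u v : ℝ, IntegrableOn (PhiI a ℓ) (Ico u v) volume := by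
    intro u v
    rcases le_total u v with h | h
    · exact ((intervalIntegrable_iff_integrableOn_Icc_of_le h).1
        (PhiI_ii a hℓ.ne' u v)).mono_set Ico_subset_Icc_self
    · rw [Ico_eq_empty (not_lt.2 h)]; exact integrableOn_empty
  have hseg : ∀ u v : ℝ, u ≤ v → (∫ x in Ico u v, PhiI a ℓ x) = ∫ x in u..v, PhiI a ℓ x := by
    intro u v huv
    rw [intervalIntegral.integral_of_le huv]
    exact setIntegral_congr_set Ico_ae_eq_Ioc
  have l1 : c + ℓ / 2 ≤ c + 3 * ℓ / 4 := by linarith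
  have l2 : c + 3 * ℓ / 4 ≤ c + ℓ := by linarith
  set s := (c - a) / ℓ with hsdef
  have e0 : (c + ℓ / 2 - a) / ℓ = s + 1/2 := by rw [hsdef]; field_simp; ring
  have e1 : (c + 3 * ℓ / 4 - a) / ℓ = s + 3/4 := by rw [hsdef]; field_simp; ring
  have e2 : (c + ℓ - a) / ℓ = s + 1 := by rw [hsdef]; field_simp; ring
  have c1 : (∫ x in (c + 3 * ℓ / 4)..(c + ℓ), PhiI a ℓ x)
      = ℓ * FF (s + 1) - ℓ * FF (s + 3/4) := by
    rw [integral_PhiI hℓ l2 ?_, e1, e2]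
    rw [e1, e2]
    rcases hs with h | h
    · exact Or.inl (by linarith)
    · exact Or.inr (by linarith)
  have c2 : (∫ x in (c + ℓ / 2)..(c + 3 * ℓ / 4), PhiI a ℓ x)
      = ℓ * FF (s + 3/4) - ℓ * FF (s + 1/2) := by
    rw [integral_PhiI hℓ l1 ?_, e0, e1]
    rw [e0, e1]
    rcases hs with h | h
    · exact Or.inl (by linarith)
    · exact Or.inr (by linarith)
  calc (∫ x, PhiI a ℓ x * haarOn (c + ℓ / 2) (c + ℓ) x)
      = ∫ x, (indicator (Ico (c + 3 * ℓ / 4) (c + ℓ)) (PhiI a ℓ) x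
          - indicator (Ico (c + ℓ / 2) (c + 3 * ℓ / 4)) (PhiI a ℓ) x) := by
        simp only [hfun]
    _ = (∫ x, indicator (Ico (c + 3 * ℓ / 4) (c + ℓ)) (PhiI a ℓ) x)
          - ∫ x, indicator (Ico (c + ℓ / 2) (c + 3 * ℓ / 4)) (PhiI a ℓ) x := by
        exact integral_sub ((integrable_indicator_iff measurableSet_Ico).2 (hio _ _))
          ((integrable_indicator_iff measurableSet_Ico).2 (hio _ _))
    _ = (∫ x in (c + 3 * ℓ / 4)..(c + ℓ), PhiI a ℓ x)
          - ∫ x in (c + ℓ / 2)..(c + 3 * ℓ / 4), PhiI a ℓ x := by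
        rw [integral_indicator measurableSet_Ico, integral_indicator measurableSet_Ico,
          hseg _ _ l2, hseg _ _ l1]
    _ = ℓ * (FF (s + 1) - 2 * FF (s + 3/4) + FF (s + 1/2)) := by
        rw [c1, c2]; ring

theorem statement13 (aI aJ ℓ : ℝ) (hℓ : 0 < ℓ)
    (hdisj : Disjoint (Set.Ico aI (aI + ℓ)) (Set.Ico aJ (aJ + ℓ))) :
    (∫ x, PhiI aI ℓ x * haarOn (aJ + ℓ / 2) (aJ + ℓ) x) +
      (∫ x, PhiI aJ ℓ x * haarOn (aI + ℓ / 2) (aI + ℓ) x) < 0 := by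
  have main : ∀ b c : ℝ, b + ℓ ≤ c →
      (∫ x, PhiI b ℓ x * haarOn (c + ℓ / 2) (c + ℓ) x) +
        (∫ x, PhiI c ℓ x * haarOn (b + ℓ / 2) (b + ℓ) x) < 0 := by
    intro b c hbc
    have hs1 : 1 ≤ (c - b) / ℓ := (one_le_div hℓ).2 (by linarith)
    have hs2 : (b - c) / ℓ ≤ -1 := by
      rw [div_le_iff₀ hℓ]; linarith
    rw [integral_PhiI_haar b c hℓ (Or.inl hs1), integral_PhiI_haar c b hℓ (Or.inr hs2)]
    set s := (c - b) / ℓ with hsdef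
    have hbs : (b - c) / ℓ = -s := by rw [hsdef]; ring
    have f1 : (b - c) / ℓ + 1 = 1 - s := by rw [hbs]; ring
    have f2 : (b - c) / ℓ + 3/4 = 1 - (s + 1/4) := by rw [hbs]; ring
    have f3 : (b - c) / ℓ + 1/2 = 1 - (s + 1/2) := by rw [hbs]; ring
    rw [f1, f2, f3, FF_one_sub, FF_one_sub, FF_one_sub]
    have hneg := Psi_neg hs1
    have : ℓ * (FF (s + 1) - 2 * FF (s + 3/4) + FF (s + 1/2)) +
        ℓ * (-FF s - 2 * -FF (s + 1/4) + -FF (s + 1/2)) =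
        ℓ * (FF (s + 1) - 2 * FF (s + 3/4) + 2 * FF (s + 1/4) - FF s) := by ring
    rw [this]
    exact mul_neg_of_pos_of_neg hℓ hneg
  have horder : aI + ℓ ≤ aJ ∨ aJ + ℓ ≤ aI := by
    by_contra hcon
    push_neg at hcon
    have hmem1 : max aI aJ ∈ Ico aI (aI + ℓ) :=
      ⟨le_max_left _ _, max_lt (by linarith) hcon.1⟩
    have hmem2 : max aI aJ ∈ Ico aJ (aJ + ℓ) :=
      ⟨le_max_right _ _, max_lt hcon.2 (by linarith)⟩
    exact Set.disjoint_left.1 hdisj hmem1 hmem2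
  rcases horder with h | h
  · exact main aI aJ h
  · rw [add_comm]; exact main aJ aI h
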